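/- Let σ² > 0, γ > 0, L ≥ 1 an integer, c₁, …, c_L > 0, and c₀ = (Σ_{ℓ=1}^L 1/c_ℓ)⁻¹. Let Θ be the (L+1)×(L+1) real symmetric matrix indexed by 0, …, L with diagonal entries Θ_{ℓℓ} = c_ℓ(γ² − σ⁴c_ℓ)(γ + σ²)²/γ² for ℓ = 0, …, L, off-diagonal entries Θ_{0ℓ} = Θ_{ℓ0} = c₀(γ² − σ⁴c_ℓ)(γ + σ²)²/γ² for ℓ = 1, …, L, and all other entries zero. Then det(Θ) = σ⁴c₀²(L−1) · ((γ + σ²)/γ)^{2(L+1)} · Π_{ℓ=1}^L c_ℓ(γ² − σ⁴c_ℓ). -/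

import Mathlib

open scoped BigOperators

/-- determinant of the arrowhead covariance matrix `Θ` (indexed by `0, …, L`,
with `cc 0 = c₀ = (Σ 1/c_ℓ)⁻¹`):
`det Θ = σ⁴c₀²(L−1)·((γ + σ²)/γ)^{2(L+1)}·Π_{ℓ=1}^L c_ℓ(γ² − σ⁴c_ℓ)`. -/
theorem det_Theta (s γ : ℝ) (hs : 0 < s) (hγ : 0 < γ) (L : ℕ) (hL : 1 ≤ L)
    (c : Fin L → ℝ) (hc : ∀ ℓ, 0 < c ℓ) :
    ∀ c₀ : ℝ, c₀ = (∑ ℓ, (c ℓ)⁻¹)⁻¹ →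
    ∀ cc : Fin (L + 1) → ℝ, cc = Fin.cases c₀ c →
    ∀ Θ : Matrix (Fin (L + 1)) (Fin (L + 1)) ℝ,
      Θ = Matrix.of (fun i j =>
        if i = j then cc i * (γ ^ 2 - s ^ 2 * cc i) * (γ + s) ^ 2 / γ ^ 2
        else if i = 0 then c₀ * (γ ^ 2 - s ^ 2 * cc j) * (γ + s) ^ 2 / γ ^ 2
        else if j = 0 then c₀ * (γ ^ 2 - s ^ 2 * cc i) * (γ + s) ^ 2 / γ ^ 2
        else 0) →
    Θ.det = s ^ 2 * c₀ ^ 2 * ((L : ℝ) - 1) * ((γ + s) / γ) ^ (2 * (L + 1)) *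
      ∏ ℓ, (c ℓ * (γ ^ 2 - s ^ 2 * c ℓ)) := by
  intro c₀ hc₀ cc hcc Θ hΘ
  subst hcc
  have hγ' : (γ:ℝ) ≠ 0 := ne_of_gt hγ
  have hS : (0:ℝ) < ∑ ℓ, (c ℓ)⁻¹ := by
    apply Finset.sum_pos (fun i _ => inv_pos.mpr (hc i))
    exact ⟨⟨0, hL⟩, Finset.mem_univ _⟩
  have hc₀pos : 0 < c₀ := by rw [hc₀]; exact inv_pos.mpr hS
  have hc₀S : c₀ * (∑ ℓ, (c ℓ)⁻¹) = 1 := by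
    rw [hc₀]; exact inv_mul_cancel₀ (ne_of_gt hS)
  set δ : ℝ := s ^ 2 * c₀ ^ 2 * ((L : ℝ) - 1) * ((γ + s) ^ 2 / γ ^ 2) with hδ
  set E : Matrix (Fin (L+1)) (Fin (L+1)) ℝ :=
    Matrix.of (fun i j => if i = j then 1 else if i = 0 then c₀ / Fin.cases c₀ c j else 0)
    with hE
  set T : Matrix (Fin (L+1)) (Fin (L+1)) ℝ :=
    Matrix.of (fun i j => if j = 0 then
        (if i = 0 then δ
         else c₀ * (γ ^ 2 - s ^ 2 * Fin.cases c₀ c i) * (γ + s) ^ 2 / γ ^ 2)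
      else if i = j then
        Fin.cases c₀ c i * (γ ^ 2 - s ^ 2 * Fin.cases c₀ c i) * (γ + s) ^ 2 / γ ^ 2
      else 0) with hT
  -- key algebraic identity for the (0,0) entry
  have key : δ + ∑ ℓ : Fin L, (c₀ / c ℓ) *
        (c₀ * (γ ^ 2 - s ^ 2 * c ℓ) * (γ + s) ^ 2 / γ ^ 2)
      = c₀ * (γ ^ 2 - s ^ 2 * c₀) * (γ + s) ^ 2 / γ ^ 2 := by
    have term : ∀ ℓ : Fin L, (c₀ / c ℓ) *
        (c₀ * (γ ^ 2 - s ^ 2 * c ℓ) * (γ + s) ^ 2 / γ ^ 2)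
        = c₀ ^ 2 * ((c ℓ)⁻¹ * γ ^ 2 - s ^ 2) * ((γ + s) ^ 2 / γ ^ 2) := by
      intro ℓ
      have hcℓ : c ℓ ≠ 0 := ne_of_gt (hc ℓ)
      field_simp
    rw [Finset.sum_congr rfl (fun ℓ _ => term ℓ)]
    have hsum : ∑ ℓ : Fin L, c₀ ^ 2 * ((c ℓ)⁻¹ * γ ^ 2 - s ^ 2) * ((γ + s) ^ 2 / γ ^ 2)
        = c₀ ^ 2 * ((∑ ℓ, (c ℓ)⁻¹) * γ ^ 2 - (L : ℝ) * s ^ 2) * ((γ + s) ^ 2 / γ ^ 2) := by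
      rw [← Finset.sum_mul, ← Finset.mul_sum, Finset.sum_sub_distrib, ← Finset.sum_mul,
        Finset.sum_const, Finset.card_univ, Fintype.card_fin, nsmul_eq_mul]
    rw [hsum, hδ]
    have h1 : (∑ ℓ, (c ℓ)⁻¹) = 1 / c₀ := by
      rw [hc₀, one_div, inv_inv]
    rw [h1]
    field_simp
    ring
  -- the factorization Θ = E * T
  have hzs : ∀ m : Fin L, (0 : Fin (L+1)) ≠ m.succ := fun m => (Fin.succ_ne_zero m).symm
  have hfac : Θ = E * T := by
    subst hΘ
    ext i j
    rw [Matrix.mul_apply]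
    induction i using Fin.cases with
    | zero =>
      rw [Fin.sum_univ_succ]
      induction j using Fin.cases with
      | zero =>
        simp only [hE, hT, Matrix.of_apply, Fin.cases_zero, Fin.cases_succ, if_pos rfl,
          Fin.succ_ne_zero, if_false, ite_true, ite_false, one_mul]
        rw [← key]
        congr 1
      | succ m =>
        simp only [hE, hT, Matrix.of_apply, Fin.cases_zero, Fin.cases_succ, if_pos rfl,
          if_neg (hzs m), if_neg (Fin.succ_ne_zero m), one_mul, ite_false]
        rw [Finset.sum_congr rfl (g := fun ℓ : Fin L =>
          if ℓ = m then (c₀ / c ℓ) *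
            (c ℓ * (γ ^ 2 - s ^ 2 * c ℓ) * (γ + s) ^ 2 / γ ^ 2) else 0)]
        · rw [Finset.sum_ite_eq' Finset.univ m, if_pos (Finset.mem_univ m)]
          have hcm : c m ≠ 0 := ne_of_gt (hc m)
          field_simp
          simp only [if_true]
          field_simp
          ring
        · intro ℓ _
          by_cases h : ℓ = m
          · subst h
            simp [hzs ℓ, Fin.succ_ne_zero]
          · have h2 : Fin.succ ℓ ≠ Fin.succ m := fun hh => h (Fin.succ_injective _ hh)
            simp [hzs ℓ, Fin.succ_ne_zero, h2, h]
    | succ n =>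
      have hn0 : Fin.succ n ≠ 0 := Fin.succ_ne_zero n
      rw [Finset.sum_congr rfl (g := fun k : Fin (L+1) =>
        if k = n.succ then T n.succ j else 0)]
      · rw [Finset.sum_ite_eq' Finset.univ n.succ, if_pos (Finset.mem_univ _)]
        induction j using Fin.cases with
        | zero => simp [hT, hn0]
        | succ m =>
          by_cases h : n = m
          · subst h; simp [hT, Fin.succ_ne_zero]
          · have h2 : Fin.succ n ≠ Fin.succ m := fun hh => h (Fin.succ_injective _ hh)
            simp [hT, Fin.succ_ne_zero, h2]
      · intro k _
        by_cases h : k = n.succ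
        · subst h
          simp [hE]
        · have h' : Fin.succ n ≠ k := Ne.symm h
          simp [hE, hn0, h, h']
  -- determinants of the triangular factors
  have hdetE : E.det = 1 := by
    have : E.BlockTriangular id := by
      intro i j hij
      have h1 : i ≠ j := fun h => absurd (h ▸ hij) (lt_irrefl _)
      have h2 : i ≠ 0 := by
        intro h
        subst h
        simp at hij
      simp [hE, h1, h2]
    rw [Matrix.det_of_upperTriangular this]
    simp [hE]
  have hdetT : T.det = δ * ∏ ℓ, (c ℓ * (γ ^ 2 - s ^ 2 * c ℓ) * ((γ + s) ^ 2 / γ ^ 2)) := by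
    have htri : T.BlockTriangular OrderDual.toDual := by
      intro i j hij
      have hij' : i < j := hij
      have h1 : j ≠ 0 := by
        intro h
        subst h
        simp at hij'
      have h2 : i ≠ j := ne_of_lt hij'
      simp [hT, h1, h2]
    rw [Matrix.det_of_lowerTriangular T htri, Fin.prod_univ_succ]
    simp only [hT, Matrix.of_apply, if_pos rfl, Fin.cases_succ, Fin.succ_ne_zero, if_false,
      Fin.cases_zero, ite_true]
    congr 1
    apply Finset.prod_congr rfl
    intro ℓ _
    ring
  -- put everything together
  rw [hfac, Matrix.det_mul, hdetE, hdetT, one_mul]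
  rw [Finset.prod_mul_distrib, Finset.prod_const, Finset.card_univ, Fintype.card_fin]
  have hpow : ((γ + s) / γ) ^ (2 * (L + 1)) = ((γ + s) ^ 2 / γ ^ 2) ^ (L + 1) := by
    rw [pow_mul, div_pow]
  rw [hpow, hδ]
  ring
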